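/- Let A ⊆ ℝ^n be a finite non-pyramidal set of codimension 2 and dimension d. Define an equivalence relation on A by a ∼ b iff the Gale dual rows B_a and B_b are collinear (where B is a Gale dual matrix of the exponent matrix of A; all rows are nonzero since A is not a pyramid). Then the number N of circuits C ⊆ A with dim C < dim A equals the number of equivalence classes of A/∼ having at least two elements, and consequently N + |A/∼| ≤ d + 3. -/

import Mathlib

set_option maxHeartbeats 1000000
set_option synthInstance.maxHeartbeats 1000000
open Matrix BigOperators Submodule Module

noncomputable def expMat (n s : ℕ) (a : Fin s → Fin n → ℝ) :
    Matrix (Fin (n + 1)) (Fin s) ℝ :=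
  Matrix.of fun i j => Fin.cases (motive := fun _ => ℝ) 1 (fun r => a j r) i

namespace CircAux
variable {n m : ℕ}

noncomputable def ext0 (T : Finset (Fin m)) : (↥T → ℝ) →ₗ[ℝ] (Fin m → ℝ) where
  toFun w := fun j => if h : j ∈ T then w ⟨j, h⟩ else 0
  map_add' u v := by funext j; by_cases h : j ∈ T <;> simp [h]
  map_smul' c v := by funext j; by_cases h : j ∈ T <;> simp [h]

def suppIn (T : Finset (Fin m)) : Submodule ℝ (Fin m → ℝ) where
  carrier := {v | ∀ j ∉ T, v j = 0}
  add_mem' hu hv j hj := by simp [hu j hj, hv j hj]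
  zero_mem' j hj := rfl
  smul_mem' c v hv j hj := by simp [hv j hj]

lemma mem_suppIn {T : Finset (Fin m)} {v : Fin m → ℝ} : v ∈ suppIn T ↔ ∀ j ∉ T, v j = 0 :=
  Iff.rfl

lemma ext0_inj (T : Finset (Fin m)) : Function.Injective (ext0 T) := by
  intro u v h
  funext x
  have := congrFun h x
  simpa [ext0, x.2] using this

lemma range_ext0 (T : Finset (Fin m)) : LinearMap.range (ext0 T) = suppIn T := by
  apply le_antisymm
  · rintro v ⟨w, rfl⟩ j hj
    simp [ext0, hj]
  · intro v hv
    exact ⟨fun x => v x, by funext j; by_cases h : j ∈ T <;> simp [ext0, h, hv j]⟩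

lemma sum_of_supp {M : Type*} [AddCommMonoid M] (T : Finset (Fin m)) (g : Fin m → M)
    (hg : ∀ j ∉ T, g j = 0) : ∑ j, g j = ∑ x : ↥T, g ↑x := by
  rw [Finset.sum_coe_sort]
  exact (Finset.sum_subset (Finset.subset_univ T) (fun x _ hx => hg x hx)).symm

lemma mem_ker_iff (a : Fin m → Fin n → ℝ) (v : Fin m → ℝ) :
    (expMat n m a).mulVecLin v = 0 ↔
      (∑ j, v j = 0 ∧ ∀ r, ∑ j, v j * a j r = 0) := by
  rw [Matrix.mulVecLin_apply, funext_iff]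
  constructor
  · intro h
    refine ⟨?_, fun r => ?_⟩
    · simpa [Matrix.mulVec, dotProduct, expMat, mul_comm] using h 0
    · simpa [Matrix.mulVec, dotProduct, expMat, mul_comm] using h r.succ
  · rintro ⟨h1, h2⟩ i
    induction i using Fin.cases with
    | zero => simpa [Matrix.mulVec, dotProduct, expMat, mul_comm] using h1
    | succ r => simpa [Matrix.mulVec, dotProduct, expMat, mul_comm] using h2 r

lemma Phi_eq (a : Fin m → Fin n → ℝ) (T : Finset (Fin m)) :
    (expMat n m a).mulVecLin ∘ₗ ext0 T
      = Fintype.linearCombination ℝ (fun x : ↥T => Fin.cons (1:ℝ) (a ↑x)) := by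
  apply LinearMap.ext
  intro w
  rw [LinearMap.comp_apply, Fintype.linearCombination_apply, Matrix.mulVecLin_apply]
  funext i
  rw [Finset.sum_apply]
  show ∑ j, expMat n m a i j * (ext0 T w) j = _
  have : ∀ j, expMat n m a i j * (ext0 T w) j
      = (if h : j ∈ T then w ⟨j, h⟩ * (Fin.cons (1:ℝ) (a j) : Fin (n+1) → ℝ) i else 0) := by
    intro j
    show (Fin.cons (1:ℝ) (a j) : Fin (n+1) → ℝ) i * (if h : j ∈ T then w ⟨j, h⟩ else 0) = _
    by_cases h : j ∈ T <;> simp [h, mul_comm]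
  simp_rw [this]
  rw [sum_of_supp T _ (fun j hj => dif_neg hj)]
  exact Finset.sum_congr rfl (fun x _ => by simp)

noncomputable def tailMap (n : ℕ) (c : Fin n → ℝ) : (Fin (n+1) → ℝ) →ₗ[ℝ] (Fin n → ℝ) where
  toFun v := fun r => v r.succ - v 0 * c r
  map_add' u v := by funext r; simp; ring
  map_smul' t v := by funext r; simp; ring

lemma ker_tailMap (c : Fin n → ℝ) :
    LinearMap.ker (tailMap n c) = span ℝ {(Fin.cons 1 c : Fin (n+1) → ℝ)} := by
  apply le_antisymm
  · intro v hv
    have hv' : ∀ r, v r.succ - v 0 * c r = 0 := fun r => congrFun (LinearMap.mem_ker.mp hv) r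
    rw [mem_span_singleton]
    refine ⟨v 0, ?_⟩
    funext i
    induction i using Fin.cases with
    | zero => simp
    | succ r => have := hv' r; simp only [Pi.smul_apply, Fin.cons_succ, smul_eq_mul]; linarith
  · rw [span_le, Set.singleton_subset_iff]
    show tailMap n c _ = 0
    funext r
    show (Fin.cons 1 c : Fin (n+1) → ℝ) r.succ - (Fin.cons 1 c : Fin (n+1) → ℝ) 0 * c r = 0
    simp

lemma span_cons_finrank {ι : Type*} [Fintype ι] [Nonempty ι] (b : ι → Fin n → ℝ) :
    finrank ℝ (span ℝ (Set.range fun x => (Fin.cons (1:ℝ) (b x) : Fin (n+1) → ℝ)))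
      = finrank ℝ (vectorSpan ℝ (Set.range b)) + 1 := by
  obtain ⟨i0⟩ := ‹Nonempty ι›
  set g : ι → Fin (n+1) → ℝ := fun x => (Fin.cons (1:ℝ) (b x) : Fin (n+1) → ℝ) with hg
  set V1 : Submodule ℝ (Fin (n+1) → ℝ) := span ℝ (Set.range g) with hV1
  set L := tailMap n (b i0) with hL
  have hLg : ∀ x, L (g x) = b x - b i0 := by
    intro x
    funext r
    show (Fin.cons 1 (b x) : Fin (n+1) → ℝ) r.succ - (Fin.cons 1 (b x) : Fin (n+1) → ℝ) 0 * b i0 r = _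
    simp
  have hkerL : LinearMap.ker L = span ℝ {g i0} := ker_tailMap (b i0)
  have hgi0 : g i0 ∈ V1 := subset_span (Set.mem_range_self i0)
  have hle : LinearMap.ker L ≤ V1 := by
    rw [hkerL, span_le, Set.singleton_subset_iff]; exact hgi0
  have hrn := LinearMap.finrank_range_add_finrank_ker (L.domRestrict V1)
  have h1 : LinearMap.range (L.domRestrict V1) = vectorSpan ℝ (Set.range b) := by
    have hcomp : L ∘ g = fun x => b x -ᵥ b i0 := by
      funext x
      rw [Function.comp_apply, hLg x, vsub_eq_sub]
    rw [LinearMap.range_domRestrict, hV1, Submodule.map_span, ← Set.range_comp, hcomp,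
      vectorSpan_range_eq_span_range_vsub_right ℝ b i0]
  have h2 : finrank ℝ (LinearMap.ker (L.domRestrict V1)) = 1 := by
    rw [LinearMap.ker_domRestrict]
    rw [(Submodule.comapSubtypeEquivOfLe hle).finrank_eq, hkerL]
    apply finrank_span_singleton
    intro h
    have := congrFun h 0
    simp [hg] at this
  rw [h1, h2] at hrn
  omega

/-- Master dimension formula. -/
lemma card_formula (a : Fin m → Fin n → ℝ) (T : Finset (Fin m)) (hT : T.Nonempty) :
    finrank ℝ (vectorSpan ℝ (a '' ↑T)) + 1
      + finrank ℝ (LinearMap.ker (expMat n m a).mulVecLin ⊓ suppIn T : Submodule ℝ _)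
      = T.card := by
  have hne : Nonempty ↥T := ⟨⟨hT.choose, hT.choose_spec⟩⟩
  set E := (expMat n m a).mulVecLin with hE
  set Φ := E ∘ₗ ext0 T with hΦ
  have hrn := LinearMap.finrank_range_add_finrank_ker Φ
  have hdom : finrank ℝ (↥T → ℝ) = T.card := by
    rw [Module.finrank_pi]
    exact Fintype.card_coe T
  have hrange : finrank ℝ (LinearMap.range Φ)
      = finrank ℝ (vectorSpan ℝ (a '' ↑T)) + 1 := by
    have himg : a '' ↑T = Set.range (fun x : ↥T => a ↑x) := Set.image_eq_range a ↑T
    rw [hΦ, hE, Phi_eq, Fintype.range_linearCombination, himg, span_cons_finrank]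
  have hker : finrank ℝ (LinearMap.ker Φ)
      = finrank ℝ (LinearMap.ker E ⊓ suppIn T : Submodule ℝ _) := by
    rw [(Submodule.equivMapOfInjective (ext0 T) (ext0_inj T) (LinearMap.ker Φ)).finrank_eq]
    have heq : Submodule.map (ext0 T) (LinearMap.ker Φ) = LinearMap.ker E ⊓ suppIn T := by
      rw [hΦ, LinearMap.ker_comp, Submodule.map_comap_eq, range_ext0, inf_comm]
    rw [heq]
  rw [hdom, hrange, hker] at hrn
  omega

lemma indep_iff (a : Fin m → Fin n → ℝ) (T : Finset (Fin m)) :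
    AffineIndependent ℝ (fun x : ↥T => a ↑x)
      ↔ (LinearMap.ker (expMat n m a).mulVecLin ⊓ suppIn T : Submodule ℝ _) = ⊥ := by
  rw [affineIndependent_iff_of_fintype]
  constructor
  · intro H
    rw [Submodule.eq_bot_iff]
    intro v hv
    rw [Submodule.mem_inf] at hv
    obtain ⟨hv1, hv2⟩ := hv
    rw [LinearMap.mem_ker, mem_ker_iff] at hv1
    replace hv2 : ∀ j ∉ T, v j = 0 := hv2
    set w : ↥T → ℝ := fun x => v ↑x with hw
    have hsum : ∑ x : ↥T, w x = 0 := by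
      rw [← sum_of_supp T v hv2]; exact hv1.1
    have hvsub : Finset.univ.weightedVSub (fun x : ↥T => a ↑x) w = (0 : Fin n → ℝ) := by
      rw [Finset.weightedVSub_eq_linear_combination _ hsum]
      funext r
      rw [Finset.sum_apply]
      have : ∀ x : ↥T, (w x • a ↑x) r = v ↑x * a ↑x r := fun x => rfl
      simp_rw [this]
      rw [← sum_of_supp T (fun j => v j * a j r) (fun j hj => by simp [hv2 j hj])]
      exact hv1.2 r
    have hzero := H w hsum hvsub
    funext j
    by_cases h : j ∈ T
    · exact hzero ⟨j, h⟩
    · exact hv2 j h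
  · intro H w hsum hvsub
    have hv : ext0 T w ∈ (LinearMap.ker (expMat n m a).mulVecLin ⊓ suppIn T : Submodule ℝ _) := by
      rw [Submodule.mem_inf]
      constructor
      · rw [LinearMap.mem_ker, mem_ker_iff]
        constructor
        · rw [sum_of_supp T _ (fun j hj => by simp [ext0, hj])]
          have : ∀ x : ↥T, ext0 T w ↑x = w x := fun x => by simp [ext0, x.2]
          simp_rw [this]
          exact hsum
        · intro r
          rw [sum_of_supp T (fun j => ext0 T w j * a j r)
            (fun j hj => by simp [ext0, hj])]
          have : ∀ x : ↥T, ext0 T w ↑x * a ↑x r = w x * a ↑x r := fun x => by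
            simp [ext0, x.2]
          simp_rw [this]
          rw [Finset.weightedVSub_eq_linear_combination _ hsum] at hvsub
          have := congrFun hvsub r
          rw [Finset.sum_apply] at this
          simpa using this
      · intro j hj
        simp [ext0, hj]
    rw [H] at hv
    have : ext0 T w = 0 := hv
    intro i
    have := ext0_inj T (by rw [this, map_zero] : ext0 T w = ext0 T 0)
    rw [this]
    rfl



/-- two vectors of the plane orthogonal to a common nonzero vector have zero determinant -/
lemma det2_zero_of_perp {p q x : Fin 2 → ℝ} (hx : x ≠ 0)
    (hp : p 0 * x 0 + p 1 * x 1 = 0) (hq : q 0 * x 0 + q 1 * x 1 = 0) :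
    p 0 * q 1 - p 1 * q 0 = 0 := by
  have hx' : x 0 ≠ 0 ∨ x 1 ≠ 0 := by
    by_contra h
    push_neg at h
    exact hx (funext fun i => by fin_cases i <;> simp [h.1, h.2])
  have h0 : (p 0 * q 1 - p 1 * q 0) * x 0 = 0 := by linear_combination q 1 * hp - p 1 * hq
  have h1 : (p 0 * q 1 - p 1 * q 0) * x 1 = 0 := by linear_combination (-(q 0)) * hp + p 0 * hq
  rcases hx' with h | h
  · exact (mul_eq_zero.mp h0).resolve_right h
  · exact (mul_eq_zero.mp h1).resolve_right h

/-- if `p ≠ 0`, `det (p,q) = 0` and `p ⟂ x` then `q ⟂ x`. -/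
lemma perp_of_det2 {p q x : Fin 2 → ℝ} (hp : p ≠ 0)
    (hdet : p 0 * q 1 - p 1 * q 0 = 0) (hx : p 0 * x 0 + p 1 * x 1 = 0) :
    q 0 * x 0 + q 1 * x 1 = 0 := by
  have hp' : p 0 ≠ 0 ∨ p 1 ≠ 0 := by
    by_contra h
    push_neg at h
    exact hp (funext fun i => by fin_cases i <;> simp [h.1, h.2])
  have h0 : p 0 * (q 0 * x 0 + q 1 * x 1) = 0 := by linear_combination q 0 * hx + x 1 * hdet
  have h1 : p 1 * (q 0 * x 0 + q 1 * x 1) = 0 := by linear_combination q 1 * hx - x 0 * hdet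
  rcases hp' with h | h
  · exact (mul_eq_zero.mp h0).resolve_left h
  · exact (mul_eq_zero.mp h1).resolve_left h

end CircAux

open CircAux

/-- For a non-pyramidal configuration of codimension 2 and dimension `d`, the number of circuits
of dimension `< d` equals the number of collinearity classes of Gale-dual rows having at least
two elements, and this number plus the total number of classes is at most `d + 3`. -/
theorem circuits_eq_big_classes_and_bound (n d : ℕ)
    (a : Fin (d + 3) → Fin n → ℝ) (ha : Function.Injective a)
    (hdim : Module.finrank ℝ (affineSpan ℝ (Set.range a)).direction = d)
    (hnp : ∀ i : Fin (d + 3),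
      Module.finrank ℝ (affineSpan ℝ (a '' {j | j ≠ i})).direction = d)
    (B : Matrix (Fin (d + 3)) (Fin 2) ℝ) (hBrank : B.rank = 2)
    (hgale : expMat n (d + 3) a * B = 0) :
    let col : Fin (d + 3) → Fin (d + 3) → Prop :=
      fun i j => B i 0 * B j 1 - B i 1 * B j 0 = 0
    let classes : Set (Set (Fin (d + 3))) := {S | ∃ i, S = {j | col i j}}
    let N : ℕ := {T : Finset (Fin (d + 3)) |
        (¬ AffineIndependent ℝ (fun x : ↥T => a x)) ∧
        (∀ T' : Finset (Fin (d + 3)), T' ⊂ T →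
          AffineIndependent ℝ (fun x : ↥T' => a x)) ∧
        Module.finrank ℝ (affineSpan ℝ (a '' (T : Set (Fin (d + 3))))).direction < d}.ncard
    N = {S ∈ classes | 2 ≤ S.ncard}.ncard ∧ N + classes.ncard ≤ d + 3 := by
  intro col classes N
  set E := (expMat n (d + 3) a).mulVecLin with hE
  set K := LinearMap.range B.mulVecLin with hK
  -- step 1 : K ≤ ker E
  have hKE : K ≤ LinearMap.ker E := by
    rintro v ⟨x, rfl⟩
    rw [LinearMap.mem_ker, hE, Matrix.mulVecLin_apply, Matrix.mulVecLin_apply,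
      Matrix.mulVec_mulVec, hgale, Matrix.zero_mulVec]
  have hfinK : Module.finrank ℝ K = 2 := hBrank
  -- step 2 : finrank ker E = 2
  have hsuppuniv : suppIn (Finset.univ : Finset (Fin (d+3))) = ⊤ := by
    rw [eq_top_iff]
    intro v _ j hj
    exact absurd (Finset.mem_univ j) hj
  have hkerE : Module.finrank ℝ (LinearMap.ker E) = 2 := by
    have h := card_formula a Finset.univ Finset.univ_nonempty
    rw [← hE] at h
    rw [hsuppuniv, inf_top_eq, Finset.coe_univ, Set.image_univ, Finset.card_fin] at h
    rw [direction_affineSpan] at hdim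
    rw [hdim] at h
    omega
  have hKeq : K = LinearMap.ker E :=
    Submodule.eq_of_le_of_finrank_le hKE (by rw [hkerE, hfinK])
  -- step 3 : injectivity of x ↦ B x
  have hBinj : ∀ x : Fin 2 → ℝ, B.mulVec x = 0 → x = 0 := by
    intro x hx
    have hrn := LinearMap.finrank_range_add_finrank_ker B.mulVecLin
    rw [Module.finrank_pi] at hrn
    have : Module.finrank ℝ (LinearMap.ker B.mulVecLin) = 0 := by
      have : B.rank = Module.finrank ℝ (LinearMap.range B.mulVecLin) := rfl
      simp [Fintype.card_fin] at hrn
      omega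
    have hker : LinearMap.ker B.mulVecLin = ⊥ := Submodule.finrank_eq_zero.mp this
    have : x ∈ LinearMap.ker B.mulVecLin := by
      rw [LinearMap.mem_ker, Matrix.mulVecLin_apply, hx]
    rw [hker, Submodule.mem_bot] at this
    exact this
  have hmv : ∀ (x : Fin 2 → ℝ) (j : Fin (d+3)),
      B.mulVec x j = B j 0 * x 0 + B j 1 * x 1 := by
    intro x j
    simp [Matrix.mulVec, dotProduct, Fin.sum_univ_two]
  -- step 4 : all rows of B are nonzero
  have hrow : ∀ i : Fin (d+3), (fun k => B i k) ≠ 0 := by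
    intro i hBi
    have hTc : ((({i}ᶜ : Finset (Fin (d+3))) : Set (Fin (d+3)))) = {j | j ≠ i} := by
      ext j; simp
    have hcard : ({i}ᶜ : Finset (Fin (d+3))).card = d + 2 := by
      rw [Finset.card_compl, Finset.card_singleton, Fintype.card_fin]
      omega
    have hne : ({i}ᶜ : Finset (Fin (d+3))).Nonempty := by
      rw [← Finset.card_pos, hcard]; omega
    have h := card_formula a ({i}ᶜ : Finset (Fin (d+3))) hne
    rw [← hE] at h
    rw [hTc, hcard] at h
    have hd := hnp i
    rw [direction_affineSpan] at hd
    rw [hd] at h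
    -- so finrank (ker E ⊓ suppIn {i}ᶜ) = 1
    have hle2 : LinearMap.ker E ≤ suppIn ({i}ᶜ : Finset (Fin (d+3))) := by
      intro v hv
      rw [← hKeq] at hv
      obtain ⟨x, rfl⟩ := hv
      intro j hj
      have : j = i := by simpa using hj
      subst this
      rw [Matrix.mulVecLin_apply, hmv]
      have h0 : B j 0 = 0 := congrFun hBi 0
      have h1 : B j 1 = 0 := congrFun hBi 1
      rw [h0, h1]; ring
    rw [inf_eq_left.mpr hle2, hkerE] at h
    omega
  -- basic collinearity facts
  have hcol : ∀ i j, col i j ↔ B i 0 * B j 1 - B i 1 * B j 0 = 0 := fun i j => Iff.rfl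
  have hcol_refl : ∀ i, col i i := by intro i; rw [hcol]; ring
  have hcol_symm : ∀ {i j}, col i j → col j i := by
    intro i j h; rw [hcol] at *; linarith
  have hrow' : ∀ i : Fin (d+3), ¬ (B i 0 = 0 ∧ B i 1 = 0) := by
    intro i h
    exact hrow i (funext fun k => by fin_cases k <;> simp [h.1, h.2])

  have hcol_trans : ∀ {i j k}, col i j → col j k → col i k := by
    intro i j k h1 h2
    rw [hcol] at *
    have e0 : B j 0 * (B i 0 * B k 1 - B i 1 * B k 0) = 0 := by
      linear_combination B k 0 * h1 + B i 0 * h2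
    have e1 : B j 1 * (B i 0 * B k 1 - B i 1 * B k 0) = 0 := by
      linear_combination B k 1 * h1 + B i 1 * h2
    rcases not_and_or.mp (hrow' j) with h | h
    · exact (mul_eq_zero.mp e0).resolve_left h
    · exact (mul_eq_zero.mp e1).resolve_left h

  classical
  have hsumsq : ∀ p q : ℝ, p * p + q * q = 0 → p = 0 ∧ q = 0 := by
    intro p q h
    constructor <;> nlinarith [sq_nonneg p, sq_nonneg q]
  set c : Fin (d+3) → Finset (Fin (d+3)) :=
    fun i => Finset.univ.filter (fun j => B i 0 * B j 1 - B i 1 * B j 0 = 0) with hc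
  have mem_c : ∀ i j, j ∈ c i ↔ col i j := by
    intro i j; rw [hc]; simp [hcol]
  have hc_eq : ∀ {i j}, col i j → c i = c j := by
    intro i j h
    ext k
    rw [mem_c, mem_c]
    exact ⟨fun hik => hcol_trans (hcol_symm h) hik, fun hjk => hcol_trans h hjk⟩
  have hself : ∀ i, i ∈ c i := fun i => (mem_c i i).mpr (hcol_refl i)
  have hker_mem : ∀ v, v ∈ LinearMap.ker E → ∃ x, v = B.mulVec x := by
    intro v hv
    rw [← hKeq] at hv
    obtain ⟨x, hx⟩ := hv
    exact ⟨x, by rw [← hx, Matrix.mulVecLin_apply]⟩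
  -- circuit characterization
  have hchar : ∀ T : Finset (Fin (d+3)),
      ((¬ AffineIndependent ℝ (fun x : ↥T => a x)) ∧
        (∀ T' : Finset (Fin (d+3)), T' ⊂ T → AffineIndependent ℝ (fun x : ↥T' => a x)) ∧
        Module.finrank ℝ (affineSpan ℝ (a '' (T : Set (Fin (d+3))))).direction < d)
      ↔ ∃ i, 2 ≤ (c i).card ∧ T = (c i)ᶜ := by
    intro T
    constructor
    · rintro ⟨hdep, hmin, hdlt⟩
      have hZ : (LinearMap.ker E ⊓ suppIn T : Submodule ℝ _) ≠ ⊥ := by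
        intro h
        exact hdep ((indep_iff a T).mpr h)
      obtain ⟨v, hvmem, hv0⟩ := (Submodule.ne_bot_iff _).mp hZ
      have hvker : v ∈ LinearMap.ker E := (Submodule.mem_inf.mp hvmem).1
      have hvsupp : ∀ j ∉ T, v j = 0 := (Submodule.mem_inf.mp hvmem).2
      obtain ⟨x, hx⟩ := hker_mem v hvker
      subst hx
      have hx0 : x ≠ 0 := fun h => hv0 (by rw [h, Matrix.mulVec_zero])
      set S := Finset.univ.filter (fun j => B.mulVec x j ≠ 0) with hS
      have hST : S ⊆ T := by
        intro j hj
        rw [hS, Finset.mem_filter] at hj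
        by_contra hjT
        exact hj.2 (hvsupp j hjT)
      have hSeqT : S = T := by
        by_contra hne
        have hss : S ⊂ T := lt_of_le_of_ne hST hne
        have hind := hmin S hss
        rw [indep_iff] at hind
        have hmem2 : B.mulVec x ∈
            (LinearMap.ker ((expMat n (d+3) a).mulVecLin) ⊓ suppIn S : Submodule ℝ _) := by
          refine Submodule.mem_inf.mpr ⟨hvker, ?_⟩
          intro j hj
          rw [hS, Finset.mem_filter] at hj
          push_neg at hj
          exact hj (Finset.mem_univ j)
        rw [hind] at hmem2
        exact hv0 hmem2
      have hTne : T.Nonempty := by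
        obtain ⟨j0, hj0⟩ := Function.ne_iff.mp hv0
        exact ⟨j0, hSeqT ▸ (Finset.mem_filter.mpr ⟨Finset.mem_univ j0, hj0⟩)⟩
      have hTcard := card_formula a T hTne
      rw [← hE] at hTcard
      have hZle : Module.finrank ℝ (LinearMap.ker E ⊓ suppIn T : Submodule ℝ _) ≤ 2 := by
        rw [← hkerE]; exact Submodule.finrank_mono inf_le_left
      have hdlt' : Module.finrank ℝ (vectorSpan ℝ (a '' (T : Set (Fin (d+3))))) < d := by
        rw [← direction_affineSpan]; exact hdlt
      have hTlt : T.card < d + 3 := by omega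
      have hTcne : (Tᶜ : Finset (Fin (d+3))).Nonempty := by
        rw [← Finset.card_pos, Finset.card_compl, Fintype.card_fin]
        omega
      obtain ⟨i, hi⟩ := hTcne
      have hiT : i ∉ T := Finset.mem_compl.mp hi
      have hBix : B i 0 * x 0 + B i 1 * x 1 = 0 := by
        have := hvsupp i hiT
        rwa [hmv] at this
      have hmemS : ∀ j, j ∈ T ↔ B.mulVec x j ≠ 0 := by
        intro j
        rw [← hSeqT, hS, Finset.mem_filter]
        simp
      have hTeq : T = (c i)ᶜ := by
        ext j
        rw [Finset.mem_compl, mem_c, hmemS]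
        constructor
        · intro hj hcolij
          apply hj
          rw [hmv]
          exact perp_of_det2 (hrow i) hcolij hBix
        · intro hncol
          intro hvj
          rw [hmv] at hvj
          exact hncol (det2_zero_of_perp hx0 hBix hvj)
      -- finrank of Z(T) is at most 1
      have hu : B.mulVec (fun k => B i k) ∈ LinearMap.ker E := hKE ⟨(fun k => B i k), rfl⟩
      have hui : B.mulVec (fun k => B i k) i ≠ 0 := by
        rw [hmv]
        intro h
        exact hrow' i (hsumsq _ _ h)
      have hltker : (LinearMap.ker E ⊓ suppIn T : Submodule ℝ _) < LinearMap.ker E := by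
        rw [lt_iff_le_and_ne]
        refine ⟨inf_le_left, fun heq => ?_⟩
        have hmem3 : B.mulVec (fun k => B i k) ∈
            (LinearMap.ker E ⊓ suppIn T : Submodule ℝ _) := by rw [heq]; exact hu
        exact hui ((Submodule.mem_inf.mp hmem3).2 i hiT)
      have hZlt : Module.finrank ℝ (LinearMap.ker E ⊓ suppIn T : Submodule ℝ _) < 2 := by
        rw [← hkerE]
        exact Submodule.finrank_lt_finrank_of_lt hltker
      have hZpos : 0 < Module.finrank ℝ (LinearMap.ker E ⊓ suppIn T : Submodule ℝ _) := by
        refine Module.finrank_pos_iff.mpr (nontrivial_of_ne ⟨B.mulVec x, hvmem⟩ 0 ?_)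
        intro hh
        exact hv0 (congrArg Subtype.val hh)
      have hccard : (c i).card = d + 3 - T.card := by
        have : T.card = d + 3 - (c i).card := by
          rw [hTeq, Finset.card_compl, Fintype.card_fin]
        have hcle : (c i).card ≤ d + 3 :=
          le_trans (Finset.card_le_univ _) (by simp)
        omega
      refine ⟨i, ?_, hTeq⟩
      omega
    · rintro ⟨i, h2, rfl⟩
      set x : Fin 2 → ℝ := ![B i 1, -(B i 0)] with hxdef
      have hx01 : x 0 = B i 1 ∧ x 1 = -(B i 0) := by constructor <;> simp [hxdef]
      have hx0 : x ≠ 0 := by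
        intro h
        apply hrow' i
        constructor
        · have := congrFun h 1
          rw [hx01.2] at this
          simpa using this
        · have := congrFun h 0
          rw [hx01.1] at this
          simpa using this
      have hvj : ∀ j, B.mulVec x j = -(B i 0 * B j 1 - B i 1 * B j 0) := by
        intro j
        rw [hmv, hx01.1, hx01.2]
        ring
      have hvz : ∀ j, B.mulVec x j = 0 ↔ col i j := by
        intro j
        rw [hvj, hcol]
        constructor <;> intro h <;> linarith
      have hv0 : B.mulVec x ≠ 0 := fun h => hx0 (hBinj x h)
      have hvker : B.mulVec x ∈ LinearMap.ker E := hKE ⟨x, rfl⟩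
      have hvsupp : ∀ j ∉ ((c i)ᶜ : Finset (Fin (d+3))), B.mulVec x j = 0 := by
        intro j hj
        have : j ∈ c i := by simpa using hj
        exact (hvz j).mpr ((mem_c i j).mp this)
      have hvmem : B.mulVec x ∈ (LinearMap.ker E ⊓ suppIn ((c i)ᶜ) : Submodule ℝ _) :=
        Submodule.mem_inf.mpr ⟨hvker, hvsupp⟩
      refine ⟨?_, ?_, ?_⟩
      · intro hind
        rw [indep_iff] at hind
        rw [hind] at hvmem
        exact hv0 hvmem
      · intro T' hss
        rw [indep_iff, Submodule.eq_bot_iff]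
        intro u hu
        obtain ⟨y, hy⟩ := hker_mem u (Submodule.mem_inf.mp hu).1
        subst hy
        by_contra hu0
        have hy0 : y ≠ 0 := fun h => hu0 (by rw [h, Matrix.mulVec_zero])
        have husupp : ∀ j ∉ T', B.mulVec y j = 0 := (Submodule.mem_inf.mp hu).2
        have hiT' : i ∉ T' := by
          intro h
          exact (Finset.mem_compl.mp (hss.subset h)) (hself i)
        have hBiy : B i 0 * y 0 + B i 1 * y 1 = 0 := by
          have := husupp i hiT'
          rwa [hmv] at this
        obtain ⟨k, hkT, hkT'⟩ := Finset.exists_of_ssubset hss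
        have hBky : B k 0 * y 0 + B k 1 * y 1 = 0 := by
          have := husupp k hkT'
          rwa [hmv] at this
        have hcolik : col i k := det2_zero_of_perp hy0 hBiy hBky
        exact (Finset.mem_compl.mp hkT) ((mem_c i k).mpr hcolik)
      · have hTne : ((c i)ᶜ : Finset (Fin (d+3))).Nonempty := by
          obtain ⟨j, hj⟩ := Function.ne_iff.mp hv0
          refine ⟨j, Finset.mem_compl.mpr (fun hk => hj ?_)⟩
          exact (hvz j).mpr ((mem_c i j).mp hk)
        have h := card_formula a ((c i)ᶜ) hTne
        rw [← hE] at h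
        have hcard : ((c i)ᶜ : Finset (Fin (d+3))).card = d + 3 - (c i).card := by
          rw [Finset.card_compl, Fintype.card_fin]
        have hZpos : 0 < Module.finrank ℝ
            (LinearMap.ker E ⊓ suppIn ((c i)ᶜ) : Submodule ℝ _) := by
          refine Module.finrank_pos_iff.mpr (nontrivial_of_ne ⟨B.mulVec x, hvmem⟩ 0 ?_)
          intro hh
          exact hv0 (congrArg Subtype.val hh)
        rw [direction_affineSpan]
        omega
  -- counting
  set CF : Finset (Finset (Fin (d+3))) := Finset.univ.image c with hCF
  have hmemCF : ∀ S, S ∈ CF ↔ ∃ i, c i = S := by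
    intro S
    rw [hCF, Finset.mem_image]
    simp
  have hcoe_c : ∀ i, ((c i : Finset (Fin (d+3))) : Set (Fin (d+3))) = {j | col i j} := by
    intro i
    ext j
    rw [Finset.mem_coe, mem_c]
    rfl
  have hclasses_eq : classes
      = (fun S : Finset (Fin (d+3)) => (S : Set (Fin (d+3)))) '' ↑CF := by
    ext Sset
    constructor
    · rintro ⟨i, rfl⟩
      exact ⟨c i, Finset.mem_coe.mpr ((hmemCF _).mpr ⟨i, rfl⟩), hcoe_c i⟩
    · rintro ⟨S, hS, rfl⟩
      obtain ⟨i, rfl⟩ := (hmemCF S).mp (Finset.mem_coe.mp hS)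
      exact ⟨i, (hcoe_c i)⟩
  set CF2 : Finset (Finset (Fin (d+3))) := CF.filter (fun S => 2 ≤ S.card) with hCF2
  have hbig_eq : {S ∈ classes | 2 ≤ S.ncard}
      = (fun S : Finset (Fin (d+3)) => (S : Set (Fin (d+3)))) '' ↑CF2 := by
    ext Sset
    constructor
    · rintro ⟨hmem, h2⟩
      rw [hclasses_eq] at hmem
      obtain ⟨S, hS, rfl⟩ := hmem
      rw [Set.ncard_coe_finset] at h2
      exact ⟨S, Finset.mem_coe.mpr (Finset.mem_filter.mpr ⟨Finset.mem_coe.mp hS, h2⟩), rfl⟩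
    · rintro ⟨S, hS, rfl⟩
      obtain ⟨h1, h2⟩ := Finset.mem_filter.mp (Finset.mem_coe.mp hS)
      refine ⟨?_, by rwa [Set.ncard_coe_finset]⟩
      rw [hclasses_eq]
      exact ⟨S, Finset.mem_coe.mpr h1, rfl⟩
  have hNset : {T : Finset (Fin (d + 3)) |
        (¬ AffineIndependent ℝ (fun x : ↥T => a x)) ∧
        (∀ T' : Finset (Fin (d + 3)), T' ⊂ T →
          AffineIndependent ℝ (fun x : ↥T' => a x)) ∧
        Module.finrank ℝ (affineSpan ℝ (a '' (T : Set (Fin (d + 3))))).direction < d}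
      = ↑(CF2.image (fun S => Sᶜ)) := by
    ext T
    rw [Set.mem_setOf_eq, hchar T]
    constructor
    · rintro ⟨i, h2, rfl⟩
      refine Finset.mem_coe.mpr (Finset.mem_image.mpr ⟨c i, ?_, rfl⟩)
      exact Finset.mem_filter.mpr ⟨(hmemCF _).mpr ⟨i, rfl⟩, h2⟩
    · intro h
      obtain ⟨S, hS, rfl⟩ := Finset.mem_image.mp (Finset.mem_coe.mp h)
      obtain ⟨hSCF, h2⟩ := Finset.mem_filter.mp hS
      obtain ⟨i, rfl⟩ := (hmemCF S).mp hSCF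
      exact ⟨i, h2, rfl⟩
  have hNcard : N = CF2.card := by
    show Set.ncard _ = _
    rw [hNset, Set.ncard_coe_finset,
      Finset.card_image_of_injective _ compl_injective]
  have hclasses_ncard : classes.ncard = CF.card := by
    rw [hclasses_eq, Set.ncard_image_of_injective _ Finset.coe_injective,
      Set.ncard_coe_finset]
  have hbig_ncard : {S ∈ classes | 2 ≤ S.ncard}.ncard = CF2.card := by
    rw [hbig_eq, Set.ncard_image_of_injective _ Finset.coe_injective,
      Set.ncard_coe_finset]
  -- the partition sum
  have hfiber : ∀ S ∈ CF, Finset.univ.filter (fun i => c i = S) = S := by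
    intro S hS
    obtain ⟨i0, rfl⟩ := (hmemCF S).mp hS
    ext j
    rw [Finset.mem_filter, mem_c]
    constructor
    · rintro ⟨-, h⟩
      exact (mem_c i0 j).mp (h ▸ hself j)
    · intro h
      exact ⟨Finset.mem_univ j, hc_eq (hcol_symm h)⟩
  have hsum : ∑ S ∈ CF, S.card = d + 3 := by
    have h := Finset.card_eq_sum_card_fiberwise
      (f := c) (s := Finset.univ) (t := CF) (fun i _ => (hmemCF (c i)).mpr ⟨i, rfl⟩)
    rw [Finset.card_univ, Fintype.card_fin] at h
    calc ∑ S ∈ CF, S.card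
        = ∑ S ∈ CF, (Finset.univ.filter (fun i => c i = S)).card :=
          Finset.sum_congr rfl (fun S hS => by rw [hfiber S hS])
      _ = d + 3 := h.symm
  have hineq : CF.card + CF2.card ≤ ∑ S ∈ CF, S.card := by
    rw [hCF2, Finset.card_filter, Finset.card_eq_sum_ones CF, ← Finset.sum_add_distrib]
    refine Finset.sum_le_sum (fun S hS => ?_)
    obtain ⟨i0, rfl⟩ := (hmemCF S).mp hS
    have h1 : 0 < (c i0).card := Finset.card_pos.mpr ⟨i0, hself i0⟩
    split_ifs with h <;> omega
  constructor
  · rw [hbig_ncard]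
    exact hNcard
  · rw [hNcard, hclasses_ncard]
    omega
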